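/- arXiv:1102.3952 — 2 statements merged into one kernel-verified Lean document; each statement's English description precedes it below -/
import Mathlib

section
/- For all i, j ∈ {2,3}, the following identity of ℤ-linear endomorphisms of M_n holds: Ei∘Fj + δ_{ij}·Hi⁻ = Fj∘Ei + δ_{ij}·Hi⁺, where δ_{ij} is the Kronecker delta. (Decategorified content of Theorem 3.4(2)(d), lifting the relations e_i f_j − f_j e_i = δ_{ij} h_i for i,j ∈ {2,3}.) -/
/-- The free `ℤ`-module on the sequences `a : Fin n → Fin 8`, modelling the
Grothendieck group `K(𝒪ⁿ)` with basis the classes `b_a` of Verma modules. -/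
abbrev GrGroup (n : ℕ) : Type := (Fin n → Fin 8) →₀ ℤ

/-- The basis element `b_a` of the Grothendieck group model. -/
noncomputable def bclass {n : ℕ} (a : Fin n → Fin 8) : GrGroup n := Finsupp.single a 1

/-- The integers `c₁(a), c₂(a), c₃(a)` attached to a sequence `a : Fin n → Fin 8`:
`c₁(a) = #{m : aₘ ∈ {4,5}} − #{m : aₘ ∈ {2,3}}`,
`c₂(a) = #{m : aₘ ∈ {2,6}} − #{m : aₘ ∈ {1,5}}`,
`c₃(a) = #{m : aₘ odd} − #{m : aₘ even}`. -/
def cseq {n : ℕ} : Fin 3 → (Fin n → Fin 8) → ℤ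
  | 0, a => ((Finset.univ.filter fun m => a m = 4 ∨ a m = 5).card : ℤ) -
      ((Finset.univ.filter fun m => a m = 2 ∨ a m = 3).card : ℤ)
  | 1, a => ((Finset.univ.filter fun m => a m = 2 ∨ a m = 6).card : ℤ) -
      ((Finset.univ.filter fun m => a m = 1 ∨ a m = 5).card : ℤ)
  | 2, a => ((Finset.univ.filter fun m => (a m : ℕ) % 2 = 1).card : ℤ) -
      ((Finset.univ.filter fun m => (a m : ℕ) % 2 = 0).card : ℤ)

/-- `Hᵢ⁺` acts on the basis element `b_a` by the scalar `max(cᵢ(a), 0)`. -/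
noncomputable def Hplus (n : ℕ) (i : Fin 3) : GrGroup n →ₗ[ℤ] GrGroup n :=
  Finsupp.lift (GrGroup n) ℤ (Fin n → Fin 8) (fun a => max (cseq i a) 0 • bclass a)

/-- `Hᵢ⁻` acts on the basis element `b_a` by the scalar `max(−cᵢ(a), 0)`. -/
noncomputable def Hminus (n : ℕ) (i : Fin 3) : GrGroup n →ₗ[ℤ] GrGroup n :=
  Finsupp.lift (GrGroup n) ℤ (Fin n → Fin 8) (fun a => max (-cseq i a) 0 • bclass a)


/-- `E₂ b_a = Σ_{m : aₘ∈{1,5}} b_{a[m↦aₘ+1]}` and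
`E₃ b_a = Σ_{m : aₘ∈{0,2,4,6}} b_{a[m↦aₘ+1]}` (indexed by `2` and `3`). -/
noncomputable def Eop23 (n : ℕ) : Fin 2 → (GrGroup n →ₗ[ℤ] GrGroup n)
  | 0 => Finsupp.lift (GrGroup n) ℤ (Fin n → Fin 8) (fun a =>
      ∑ m : Fin n, if a m = 1 ∨ a m = 5 then
        bclass (Function.update a m (a m + 1)) else 0)
  | 1 => Finsupp.lift (GrGroup n) ℤ (Fin n → Fin 8) (fun a =>
      ∑ m : Fin n, if a m = 0 ∨ a m = 2 ∨ a m = 4 ∨ a m = 6 then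
        bclass (Function.update a m (a m + 1)) else 0)

/-- `F₂ b_a = Σ_{m : aₘ∈{2,6}} b_{a[m↦aₘ−1]}` and
`F₃ b_a = Σ_{m : aₘ∈{1,3,5,7}} b_{a[m↦aₘ−1]}` (indexed by `2` and `3`). -/
noncomputable def Fop23 (n : ℕ) : Fin 2 → (GrGroup n →ₗ[ℤ] GrGroup n)
  | 0 => Finsupp.lift (GrGroup n) ℤ (Fin n → Fin 8) (fun a =>
      ∑ m : Fin n, if a m = 2 ∨ a m = 6 then
        bclass (Function.update a m (a m - 1)) else 0)
  | 1 => Finsupp.lift (GrGroup n) ℤ (Fin n → Fin 8) (fun a =>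
      ∑ m : Fin n, if a m = 1 ∨ a m = 3 ∨ a m = 5 ∨ a m = 7 then
        bclass (Function.update a m (a m - 1)) else 0)


section EF23aux
variable {n : ℕ} (pE pF : Fin 8 → Prop) [DecidablePred pE] [DecidablePred pF]

/-- auxiliary: generic `E`-type operator on basis elements. -/
noncomputable def fEgen (b : Fin n → Fin 8) : GrGroup n :=
  ∑ m : Fin n, if pE (b m) then bclass (Function.update b m (b m + 1)) else 0

/-- auxiliary: generic `F`-type operator on basis elements. -/
noncomputable def fFgen (b : Fin n → Fin 8) : GrGroup n :=
  ∑ m : Fin n, if pF (b m) then bclass (Function.update b m (b m - 1)) else 0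

theorem EF23core (a : Fin n → Fin 8) :
    (∑ m' : Fin n, if pF (a m') then fEgen pE (Function.update a m' (a m' - 1)) else 0)
      + ((Finset.univ.filter fun m => pE (a m) ∧ pF (a m + 1)).card : ℤ) • bclass a
  = (∑ m : Fin n, if pE (a m) then fFgen pF (Function.update a m (a m + 1)) else 0)
      + ((Finset.univ.filter fun m => pF (a m) ∧ pE (a m - 1)).card : ℤ) • bclass a := by
  classical
  set g : Fin n × Fin n → GrGroup n := fun p =>
    if pF (a p.1) ∧ pE ((Function.update a p.1 (a p.1 - 1)) p.2) then
      bclass (Function.update (Function.update a p.1 (a p.1 - 1)) p.2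
        ((Function.update a p.1 (a p.1 - 1)) p.2 + 1)) else 0 with hg
  set h : Fin n × Fin n → GrGroup n := fun p =>
    if pE (a p.2) ∧ pF ((Function.update a p.2 (a p.2 + 1)) p.1) then
      bclass (Function.update (Function.update a p.2 (a p.2 + 1)) p.1
        ((Function.update a p.2 (a p.2 + 1)) p.1 - 1)) else 0 with hh
  have hL : (∑ m' : Fin n, if pF (a m') then fEgen pE (Function.update a m' (a m' - 1)) else 0)
      = ∑ p ∈ Finset.univ ×ˢ Finset.univ, g p := by
    rw [Finset.sum_product]
    refine Finset.sum_congr rfl fun m' _ => ?_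
    by_cases hc : pF (a m')
    · rw [if_pos hc]; unfold fEgen
      refine Finset.sum_congr rfl fun m _ => ?_
      simp only [hg, hc, true_and]
    · rw [if_neg hc]
      simp [hg, hc]
  have hR : (∑ m : Fin n, if pE (a m) then fFgen pF (Function.update a m (a m + 1)) else 0)
      = ∑ p ∈ Finset.univ ×ˢ Finset.univ, h p := by
    rw [Finset.sum_product_right]
    refine Finset.sum_congr rfl fun m _ => ?_
    by_cases hc : pE (a m)
    · rw [if_pos hc]; unfold fFgen
      refine Finset.sum_congr rfl fun m' _ => ?_
      simp only [hh, hc, true_and]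
    · rw [if_neg hc]
      simp [hh, hc]
  have hsplit : ∀ (k : Fin n × Fin n → GrGroup n),
      ∑ p ∈ Finset.univ ×ˢ Finset.univ, k p
        = (∑ m : Fin n, k (m, m)) + ∑ p ∈ (Finset.univ : Finset (Fin n)).offDiag, k p := by
    intro k
    rw [← Finset.diag_union_offDiag, Finset.sum_union (Finset.disjoint_diag_offDiag _),
      Finset.sum_diag]
  have hoff : ∀ p ∈ (Finset.univ : Finset (Fin n)).offDiag, g p = h p := by
    rintro ⟨m', m⟩ hp
    have hne : m' ≠ m := (Finset.mem_offDiag.mp hp).2.2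
    have h1 : (Function.update a m' (a m' - 1)) m = a m :=
      Function.update_of_ne (Ne.symm hne) _ _
    have h2 : (Function.update a m (a m + 1)) m' = a m' :=
      Function.update_of_ne hne _ _
    simp only [hg, hh, h1, h2]
    by_cases hc : pF (a m') ∧ pE (a m)
    · rw [if_pos ⟨hc.1, hc.2⟩, if_pos ⟨hc.2, hc.1⟩]
      rw [Function.update_comm hne]
    · rw [if_neg (by tauto), if_neg (by tauto)]
  have hgd : ∀ m : Fin n, g (m, m) = if pF (a m) ∧ pE (a m - 1) then bclass a else 0 := by
    intro m
    simp only [hg, Function.update_self]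
    by_cases hc : pF (a m) ∧ pE (a m - 1)
    · rw [if_pos hc, if_pos hc, sub_add_cancel, Function.update_idem, Function.update_eq_self]
    · rw [if_neg hc, if_neg hc]
  have hhd : ∀ m : Fin n, h (m, m) = if pE (a m) ∧ pF (a m + 1) then bclass a else 0 := by
    intro m
    simp only [hh, Function.update_self]
    by_cases hc : pE (a m) ∧ pF (a m + 1)
    · rw [if_pos hc, if_pos hc, add_sub_cancel_right, Function.update_idem,
        Function.update_eq_self]
    · rw [if_neg hc, if_neg hc]
  have hcount : ∀ (q : Fin n → Prop) (_ : DecidablePred q),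
      (∑ m : Fin n, if q m then bclass a else 0)
        = ((Finset.univ.filter q).card : ℤ) • bclass a := by
    intro q _
    rw [Finset.sum_ite, Finset.sum_const, Finset.sum_const_zero, add_zero,
      Nat.cast_smul_eq_nsmul]
  rw [hL, hR, hsplit g, hsplit h]
  have hgsum : (∑ m : Fin n, g (m, m))
      = ((Finset.univ.filter fun m => pF (a m) ∧ pE (a m - 1)).card : ℤ) • bclass a := by
    rw [Finset.sum_congr rfl fun m _ => hgd m]; exact hcount _ inferInstance
  have hhsum : (∑ m : Fin n, h (m, m))
      = ((Finset.univ.filter fun m => pE (a m) ∧ pF (a m + 1)).card : ℤ) • bclass a := by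
    rw [Finset.sum_congr rfl fun m _ => hhd m]; exact hcount _ inferInstance
  rw [hgsum, hhsum, Finset.sum_congr rfl hoff]
  abel

theorem lift_bclass (f : (Fin n → Fin 8) → GrGroup n) (a : Fin n → Fin 8) :
    Finsupp.lift (GrGroup n) ℤ (Fin n → Fin 8) f (bclass a) = f a := by
  simp [bclass, Finsupp.lift_apply, Finsupp.sum_single_index]

theorem case_gen (EE FF : GrGroup n →ₗ[ℤ] GrGroup n)
    (hE : EE = Finsupp.lift (GrGroup n) ℤ (Fin n → Fin 8) (fEgen pE))
    (hF : FF = Finsupp.lift (GrGroup n) ℤ (Fin n → Fin 8) (fFgen pF))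
    (a : Fin n → Fin 8) :
    EE (FF (bclass a))
      + ((Finset.univ.filter fun m => pE (a m) ∧ pF (a m + 1)).card : ℤ) • bclass a
    = FF (EE (bclass a))
      + ((Finset.univ.filter fun m => pF (a m) ∧ pE (a m - 1)).card : ℤ) • bclass a := by
  rw [hE, hF, lift_bclass, lift_bclass]
  have hEF : (Finsupp.lift (GrGroup n) ℤ (Fin n → Fin 8) (fEgen pE)) (fFgen pF a)
      = ∑ m' : Fin n, if pF (a m') then fEgen pE (Function.update a m' (a m' - 1)) else 0 := by
    unfold fFgen
    rw [map_sum]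
    refine Finset.sum_congr rfl fun m' _ => ?_
    split_ifs
    · exact lift_bclass _ _
    · exact map_zero _
  have hFE : (Finsupp.lift (GrGroup n) ℤ (Fin n → Fin 8) (fFgen pF)) (fEgen pE a)
      = ∑ m : Fin n, if pE (a m) then fFgen pF (Function.update a m (a m + 1)) else 0 := by
    unfold fEgen
    rw [map_sum]
    refine Finset.sum_congr rfl fun m _ => ?_
    split_ifs
    · exact lift_bclass _ _
    · exact map_zero _
  rw [hEF, hFE]
  exact EF23core pE pF a

end EF23aux

/-- Decategorified Theorem 3.4(2)(d): for `i, j ∈ {2,3}` (indexed by `Fin 2`, with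
`i.succ : Fin 3` the corresponding index of `Hᵢ`),
`Eᵢ∘Fⱼ + δᵢⱼ Hᵢ⁻ = Fⱼ∘Eᵢ + δᵢⱼ Hᵢ⁺`, lifting `eᵢfⱼ − fⱼeᵢ = δᵢⱼ hᵢ`. -/
theorem EF23_relation (n : ℕ) (hn : 0 < n) (i j : Fin 2) :
    Eop23 n i ∘ₗ Fop23 n j + (if i = j then Hminus n i.succ else 0) =
      Fop23 n j ∘ₗ Eop23 n i + (if i = j then Hplus n i.succ else 0) := by
  classical
  apply Finsupp.lhom_ext
  intro a c
  have hsingle : (Finsupp.single a c : GrGroup n) = c • bclass a := by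
    simp [bclass, Finsupp.smul_single]
  rw [hsingle, map_smul, map_smul]
  congr 1
  simp only [LinearMap.add_apply, LinearMap.comp_apply]
  fin_cases i <;> fin_cases j
  · -- i = j = 0 : E₂, F₂
    simp only [Fin.zero_eta, if_true]
    have key := case_gen (n := n) (fun x : Fin 8 => x = 1 ∨ x = 5)
      (fun x : Fin 8 => x = 2 ∨ x = 6) (Eop23 n 0) (Fop23 n 0) rfl rfl a
    have hCE : (Finset.univ.filter fun m =>
        (a m = 1 ∨ a m = 5) ∧ (a m + 1 = 2 ∨ a m + 1 = 6))
        = Finset.univ.filter fun m => a m = 1 ∨ a m = 5 :=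
      Finset.filter_congr fun m _ => by
        have : ∀ x : Fin 8, ((x = 1 ∨ x = 5) ∧ (x + 1 = 2 ∨ x + 1 = 6)) ↔ (x = 1 ∨ x = 5) := by
          decide
        exact this (a m)
    have hCF : (Finset.univ.filter fun m =>
        (a m = 2 ∨ a m = 6) ∧ (a m - 1 = 1 ∨ a m - 1 = 5))
        = Finset.univ.filter fun m => a m = 2 ∨ a m = 6 :=
      Finset.filter_congr fun m _ => by
        have : ∀ x : Fin 8, ((x = 2 ∨ x = 6) ∧ (x - 1 = 1 ∨ x - 1 = 5)) ↔ (x = 2 ∨ x = 6) := by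
          decide
        exact this (a m)
    rw [hCE, hCF] at key
    have hH : Hminus n (0 : Fin 2).succ (bclass a) = max (-cseq 1 a) 0 • bclass a :=
      lift_bclass _ a
    have hH' : Hplus n (0 : Fin 2).succ (bclass a) = max (cseq 1 a) 0 • bclass a :=
      lift_bclass _ a
    rw [hH, hH']
    set CF : ℤ := ((Finset.univ.filter fun m => a m = 2 ∨ a m = 6).card : ℤ) with hCFdef
    set CE : ℤ := ((Finset.univ.filter fun m => a m = 1 ∨ a m = 5).card : ℤ) with hCEdef
    have hcval : cseq (n := n) 1 a = CF - CE := rfl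
    have key' : Eop23 n 0 (Fop23 n 0 (bclass a))
        = Fop23 n 0 (Eop23 n 0 (bclass a)) + CF • bclass a - CE • bclass a := by
      rw [eq_sub_iff_add_eq]; exact key
    have hmax : max (cseq (n := n) 1 a) 0 = max (-(cseq (n := n) 1 a)) 0 + (CF - CE) := by
      rw [hcval]; rcases le_total (CF - CE) 0 with h | h <;>
        [rw [max_eq_right h, max_eq_left (by linarith)];
         rw [max_eq_left h, max_eq_right (by linarith)]] <;> ring
    rw [key', hmax, add_smul, sub_smul]
    abel
  · -- i = 0, j = 1 : E₂, F₃
    rw [if_neg (by decide), if_neg (by decide)]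
    have key := case_gen (n := n) (fun x : Fin 8 => x = 1 ∨ x = 5)
      (fun x : Fin 8 => x = 1 ∨ x = 3 ∨ x = 5 ∨ x = 7) (Eop23 n 0) (Fop23 n 1) rfl rfl a
    have hCE : (Finset.univ.filter fun m =>
        (a m = 1 ∨ a m = 5) ∧ (a m + 1 = 1 ∨ a m + 1 = 3 ∨ a m + 1 = 5 ∨ a m + 1 = 7))
        = (∅ : Finset (Fin n)) := by
      refine Finset.filter_false_of_mem fun m _ => ?_
      have : ∀ x : Fin 8,
          ¬((x = 1 ∨ x = 5) ∧ (x + 1 = 1 ∨ x + 1 = 3 ∨ x + 1 = 5 ∨ x + 1 = 7)) := by decide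
      exact this (a m)
    have hCF : (Finset.univ.filter fun m =>
        (a m = 1 ∨ a m = 3 ∨ a m = 5 ∨ a m = 7) ∧ (a m - 1 = 1 ∨ a m - 1 = 5))
        = (∅ : Finset (Fin n)) := by
      refine Finset.filter_false_of_mem fun m _ => ?_
      have : ∀ x : Fin 8,
          ¬((x = 1 ∨ x = 3 ∨ x = 5 ∨ x = 7) ∧ (x - 1 = 1 ∨ x - 1 = 5)) := by decide
      exact this (a m)
    rw [hCE, hCF] at key
    simpa using key
  · -- i = 1, j = 0 : E₃, F₂
    rw [if_neg (by decide), if_neg (by decide)]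
    have key := case_gen (n := n) (fun x : Fin 8 => x = 0 ∨ x = 2 ∨ x = 4 ∨ x = 6)
      (fun x : Fin 8 => x = 2 ∨ x = 6) (Eop23 n 1) (Fop23 n 0) rfl rfl a
    have hCE : (Finset.univ.filter fun m =>
        (a m = 0 ∨ a m = 2 ∨ a m = 4 ∨ a m = 6) ∧ (a m + 1 = 2 ∨ a m + 1 = 6))
        = (∅ : Finset (Fin n)) := by
      refine Finset.filter_false_of_mem fun m _ => ?_
      have : ∀ x : Fin 8,
          ¬((x = 0 ∨ x = 2 ∨ x = 4 ∨ x = 6) ∧ (x + 1 = 2 ∨ x + 1 = 6)) := by decide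
      exact this (a m)
    have hCF : (Finset.univ.filter fun m =>
        (a m = 2 ∨ a m = 6) ∧ (a m - 1 = 0 ∨ a m - 1 = 2 ∨ a m - 1 = 4 ∨ a m - 1 = 6))
        = (∅ : Finset (Fin n)) := by
      refine Finset.filter_false_of_mem fun m _ => ?_
      have : ∀ x : Fin 8,
          ¬((x = 2 ∨ x = 6) ∧ (x - 1 = 0 ∨ x - 1 = 2 ∨ x - 1 = 4 ∨ x - 1 = 6)) := by decide
      exact this (a m)
    rw [hCE, hCF] at key
    simpa using key
  · -- i = j = 1 : E₃, F₃
    simp only [Fin.mk_one, if_true]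
    have key := case_gen (n := n) (fun x : Fin 8 => x = 0 ∨ x = 2 ∨ x = 4 ∨ x = 6)
      (fun x : Fin 8 => x = 1 ∨ x = 3 ∨ x = 5 ∨ x = 7) (Eop23 n 1) (Fop23 n 1) rfl rfl a
    have hCE : (Finset.univ.filter fun m =>
        (a m = 0 ∨ a m = 2 ∨ a m = 4 ∨ a m = 6) ∧
          (a m + 1 = 1 ∨ a m + 1 = 3 ∨ a m + 1 = 5 ∨ a m + 1 = 7))
        = Finset.univ.filter fun m => (a m : ℕ) % 2 = 0 :=
      Finset.filter_congr fun m _ => by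
        have : ∀ x : Fin 8, ((x = 0 ∨ x = 2 ∨ x = 4 ∨ x = 6) ∧
            (x + 1 = 1 ∨ x + 1 = 3 ∨ x + 1 = 5 ∨ x + 1 = 7)) ↔ (x : ℕ) % 2 = 0 := by decide
        exact this (a m)
    have hCF : (Finset.univ.filter fun m =>
        (a m = 1 ∨ a m = 3 ∨ a m = 5 ∨ a m = 7) ∧
          (a m - 1 = 0 ∨ a m - 1 = 2 ∨ a m - 1 = 4 ∨ a m - 1 = 6))
        = Finset.univ.filter fun m => (a m : ℕ) % 2 = 1 :=
      Finset.filter_congr fun m _ => by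
        have : ∀ x : Fin 8, ((x = 1 ∨ x = 3 ∨ x = 5 ∨ x = 7) ∧
            (x - 1 = 0 ∨ x - 1 = 2 ∨ x - 1 = 4 ∨ x - 1 = 6)) ↔ (x : ℕ) % 2 = 1 := by decide
        exact this (a m)
    rw [hCE, hCF] at key
    have hH : Hminus n (1 : Fin 2).succ (bclass a) = max (-cseq 2 a) 0 • bclass a :=
      lift_bclass _ a
    have hH' : Hplus n (1 : Fin 2).succ (bclass a) = max (cseq 2 a) 0 • bclass a :=
      lift_bclass _ a
    rw [hH, hH']
    set CF : ℤ := ((Finset.univ.filter fun m => (a m : ℕ) % 2 = 1).card : ℤ) with hCFdef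
    set CE : ℤ := ((Finset.univ.filter fun m => (a m : ℕ) % 2 = 0).card : ℤ) with hCEdef
    have hcval : cseq (n := n) 2 a = CF - CE := rfl
    have key' : Eop23 n 1 (Fop23 n 1 (bclass a))
        = Fop23 n 1 (Eop23 n 1 (bclass a)) + CF • bclass a - CE • bclass a := by
      rw [eq_sub_iff_add_eq]; exact key
    have hmax : max (cseq (n := n) 2 a) 0 = max (-(cseq (n := n) 2 a)) 0 + (CF - CE) := by
      rw [hcval]; rcases le_total (CF - CE) 0 with h | h <;>
        [rw [max_eq_right h, max_eq_left (by linarith)];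
         rw [max_eq_left h, max_eq_right (by linarith)]] <;> ring
    rw [key', hmax, add_smul, sub_smul]
    abel
end

section
/- The following identity of ℤ-linear endomorphisms of M_n holds: E1⁺∘E1⁺∘E2 + E1⁻∘E1⁻∘E2 + E2∘E1⁺∘E1⁺ + E2∘E1⁻∘E1⁻ + 2·(E1⁺∘E2∘E1⁻) + 2·(E1⁻∘E2∘E1⁺) = E1⁺∘E1⁻∘E2 + E1⁻∘E1⁺∘E2 + E2∘E1⁺∘E1⁻ + E2∘E1⁻∘E1⁺ + 2·(E1⁺∘E2∘E1⁺) + 2·(E1⁻∘E2∘E1⁻). (Decategorified content of Theorem 3.4(5)(a), lifting the Serre relation e_1²e_2 − 2e_1e_2e_1 + e_2e_1² = 0.) -/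
/-- `E₁⁺ b_a = Σ_{m : aₘ∈{2,3}} b_{a[m↦aₘ+2]}
+ Σ_{i<j : {aᵢ,aⱼ}={2,3} or {3,4}} b_{a[i↦aᵢ+1][j↦aⱼ+1]}`. -/
noncomputable def E1plus (n : ℕ) : GrGroup n →ₗ[ℤ] GrGroup n :=
  Finsupp.lift (GrGroup n) ℤ (Fin n → Fin 8) (fun a =>
    (∑ m : Fin n, if a m = 2 ∨ a m = 3 then
        bclass (Function.update a m (a m + 2)) else 0) +
    ∑ i : Fin n, ∑ j : Fin n,
      if i < j ∧ ((a i = 2 ∧ a j = 3) ∨ (a i = 3 ∧ a j = 2) ∨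
          (a i = 3 ∧ a j = 4) ∨ (a i = 4 ∧ a j = 3)) then
        bclass (Function.update (Function.update a i (a i + 1)) j (a j + 1)) else 0)

/-- `E₁⁻ b_a = Σ_{i<j : {aᵢ,aⱼ}={2,3} or {3,4}} b_{a[i↦aᵢ+1][j↦aⱼ+1]}`. -/
noncomputable def E1minus (n : ℕ) : GrGroup n →ₗ[ℤ] GrGroup n :=
  Finsupp.lift (GrGroup n) ℤ (Fin n → Fin 8) (fun a =>
    ∑ i : Fin n, ∑ j : Fin n,
      if i < j ∧ ((a i = 2 ∧ a j = 3) ∨ (a i = 3 ∧ a j = 2) ∨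
          (a i = 3 ∧ a j = 4) ∨ (a i = 4 ∧ a j = 3)) then
        bclass (Function.update (Function.update a i (a i + 1)) j (a j + 1)) else 0)


/-- `E₂ b_a = Σ_{m : aₘ∈{1,5}} b_{a[m↦aₘ+1]}`. -/
noncomputable def E2op (n : ℕ) : GrGroup n →ₗ[ℤ] GrGroup n :=
  Finsupp.lift (GrGroup n) ℤ (Fin n → Fin 8) (fun a =>
    ∑ m : Fin n, if a m = 1 ∨ a m = 5 then
      bclass (Function.update a m (a m + 1)) else 0)

noncomputable def site (n : ℕ) (P : Fin 8 → Prop) [DecidablePred P]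
    (f : Fin 8 → Fin 8) (m : Fin n) : Module.End ℤ (GrGroup n) :=
  Finsupp.lift (GrGroup n) ℤ (Fin n → Fin 8) (fun a =>
    if P (a m) then bclass (Function.update a m (f (a m))) else 0)

lemma lift_apply_bclass {n : ℕ} (g : (Fin n → Fin 8) → GrGroup n) (a : Fin n → Fin 8) :
    Finsupp.lift (GrGroup n) ℤ (Fin n → Fin 8) g (bclass a) = g a := by
  simp [bclass, Finsupp.lift_apply, Finsupp.sum_single_index]

lemma site_apply {n : ℕ} (P : Fin 8 → Prop) [DecidablePred P] (f : Fin 8 → Fin 8)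
    (m : Fin n) (a : Fin n → Fin 8) :
    site n P f m (bclass a)
      = if P (a m) then bclass (Function.update a m (f (a m))) else 0 :=
  lift_apply_bclass _ _

lemma op_ext {n : ℕ} {F G : GrGroup n →ₗ[ℤ] GrGroup n}
    (h : ∀ a, F (bclass a) = G (bclass a)) : F = G := by
  refine Finsupp.lhom_ext fun a b => ?_
  have hb : (Finsupp.single a b : GrGroup n) = b • bclass a := by
    simp [bclass, Finsupp.smul_single]
  rw [hb, map_smul, map_smul, h]

lemma site_commute {n : ℕ} (P Q : Fin 8 → Prop) [DecidablePred P] [DecidablePred Q]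
    (f g : Fin 8 → Fin 8) {m p : Fin n} (h : m ≠ p) :
    Commute (site n P f m) (site n Q g p) := by
  show _ * _ = _ * _
  rw [Module.End.mul_eq_comp, Module.End.mul_eq_comp]
  apply op_ext; intro a
  simp only [LinearMap.comp_apply, site_apply]
  by_cases hP : P (a m) <;> by_cases hQ : Q (a p) <;>
    simp [site_apply, hP, hQ, Function.update_of_ne h, Function.update_of_ne h.symm,
      Function.update_comm h]

lemma site_mul_same {n : ℕ} (P Q : Fin 8 → Prop) [DecidablePred P] [DecidablePred Q]
    (f g : Fin 8 → Fin 8) (m : Fin n) :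
    site n P f m * site n Q g m = site n (fun x => Q x ∧ P (g x)) (f ∘ g) m := by
  rw [Module.End.mul_eq_comp]
  apply op_ext; intro a
  simp only [LinearMap.comp_apply, site_apply]
  by_cases hQ : Q (a m)
  · by_cases hP : P (g (a m)) <;>
      simp [site_apply, hQ, hP, Function.update_self, Function.update_idem]
  · simp [hQ]

lemma site_zero {n : ℕ} (P : Fin 8 → Prop) [DecidablePred P] (f : Fin 8 → Fin 8)
    (m : Fin n) (h : ∀ x, ¬ P x) : site n P f m = 0 := by
  apply op_ext; intro a; simp [site_apply, h]

noncomputable def dOp (n : ℕ) (m : Fin n) : Module.End ℤ (GrGroup n) :=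
  site n (fun x => x = 2 ∨ x = 3) (fun x => x + 2) m

noncomputable def eOp (n : ℕ) (m : Fin n) : Module.End ℤ (GrGroup n) :=
  site n (fun x => x = 1 ∨ x = 5) (fun x => x + 1) m

lemma dd_zero (n : ℕ) (m : Fin n) : dOp n m * dOp n m = 0 := by
  rw [dOp, site_mul_same]
  exact site_zero _ _ _ (by decide)

lemma ded_zero (n : ℕ) (m : Fin n) : dOp n m * eOp n m * dOp n m = 0 := by
  rw [dOp, eOp, site_mul_same, site_mul_same]
  exact site_zero _ _ _ (by decide)

lemma ded_zero' (n : ℕ) (m : Fin n) : dOp n m * (eOp n m * dOp n m) = 0 := by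
  rw [← mul_assoc, ded_zero]

-- commutator of sums of pairwise-commuting families
lemma comm_sum {R : Type*} [Ring R] {n : ℕ} (A B : Fin n → R)
    (h : ∀ m p : Fin n, m ≠ p → Commute (A m) (B p)) :
    (∑ m, A m) * (∑ m, B m) - (∑ m, B m) * (∑ m, A m)
      = ∑ m, (A m * B m - B m * A m) := by
  rw [Finset.sum_mul_sum, Finset.sum_mul_sum]
  rw [Finset.sum_comm (s := Finset.univ) (t := Finset.univ) (f := fun p m => B p * A m)]
  rw [← Finset.sum_sub_distrib]
  refine Finset.sum_congr rfl fun m _ => ?_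
  rw [← Finset.sum_sub_distrib]
  refine Finset.sum_eq_single m (fun p _ hp => ?_) (by simp)
  rw [(h m p (Ne.symm hp)).eq, sub_self]
lemma hplus (n : ℕ) : E1plus n = (∑ m, dOp n m) + E1minus n := by
  apply op_ext; intro a
  rw [LinearMap.add_apply, E1plus, E1minus, lift_apply_bclass, lift_apply_bclass,
    LinearMap.sum_apply]
  congr 1
  refine Finset.sum_congr rfl fun m _ => ?_
  rw [dOp, site_apply]

lemma hE (n : ℕ) : E2op n = ∑ m, eOp n m := by
  apply op_ext; intro a
  rw [E2op, lift_apply_bclass, LinearMap.sum_apply]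
  refine Finset.sum_congr rfl fun m _ => ?_
  rw [eOp, site_apply]

lemma key_comm (n : ℕ) :
    (∑ m, dOp n m) * ((∑ m, dOp n m) * (∑ m, eOp n m) - (∑ m, eOp n m) * (∑ m, dOp n m)) -
      ((∑ m, dOp n m) * (∑ m, eOp n m) - (∑ m, eOp n m) * (∑ m, dOp n m)) * (∑ m, dOp n m)
      = 0 := by
  set D := ∑ m, dOp n m with hDdef
  set E := ∑ m, eOp n m with hEdef
  have hde : ∀ m p : Fin n, m ≠ p → Commute (dOp n m) (eOp n p) :=
    fun m p h => site_commute _ _ _ _ h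
  have hdd : ∀ m p : Fin n, m ≠ p → Commute (dOp n m) (dOp n p) :=
    fun m p h => site_commute _ _ _ _ h
  have h1 : D * E - E * D = ∑ m, (dOp n m * eOp n m - eOp n m * dOp n m) :=
    comm_sum _ _ hde
  rw [h1, comm_sum _ _ (fun m p h =>
    ((hdd m p h).mul_right (hde m p h)).sub_right ((hde m p h).mul_right (hdd m p h)))]
  refine Finset.sum_eq_zero fun m _ => ?_
  have e1 : dOp n m * (dOp n m * eOp n m) = 0 := by
    rw [← mul_assoc, dd_zero, zero_mul]
  have e2 : dOp n m * (eOp n m * dOp n m) = 0 := ded_zero' n m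
  have e3 : dOp n m * eOp n m * dOp n m = 0 := ded_zero n m
  have e4 : eOp n m * dOp n m * dOp n m = 0 := by
    rw [mul_assoc, dd_zero, mul_zero]
  rw [mul_sub, sub_mul, e1, e2, e3, e4]
  abel
/-- Decategorified Theorem 3.4(5)(a):
`E₁⁺∘E₁⁺∘E₂ + E₁⁻∘E₁⁻∘E₂ + E₂∘E₁⁺∘E₁⁺ + E₂∘E₁⁻∘E₁⁻ + 2(E₁⁺∘E₂∘E₁⁻) + 2(E₁⁻∘E₂∘E₁⁺)
 = E₁⁺∘E₁⁻∘E₂ + E₁⁻∘E₁⁺∘E₂ + E₂∘E₁⁺∘E₁⁻ + E₂∘E₁⁻∘E₁⁺ + 2(E₁⁺∘E₂∘E₁⁺) + 2(E₁⁻∘E₂∘E₁⁻)`,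
lifting the Serre relation `e₁²e₂ − 2e₁e₂e₁ + e₂e₁² = 0`. -/
theorem serre_E1E2_relation (n : ℕ) (hn : 0 < n) :
    E1plus n ∘ₗ E1plus n ∘ₗ E2op n + E1minus n ∘ₗ E1minus n ∘ₗ E2op n +
        E2op n ∘ₗ E1plus n ∘ₗ E1plus n + E2op n ∘ₗ E1minus n ∘ₗ E1minus n +
        2 • (E1plus n ∘ₗ E2op n ∘ₗ E1minus n) + 2 • (E1minus n ∘ₗ E2op n ∘ₗ E1plus n) =
      E1plus n ∘ₗ E1minus n ∘ₗ E2op n + E1minus n ∘ₗ E1plus n ∘ₗ E2op n +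
        E2op n ∘ₗ E1plus n ∘ₗ E1minus n + E2op n ∘ₗ E1minus n ∘ₗ E1plus n +
        2 • (E1plus n ∘ₗ E2op n ∘ₗ E1plus n) + 2 • (E1minus n ∘ₗ E2op n ∘ₗ E1minus n) := by

  rw [hplus n, hE n, ← sub_eq_zero]
  simp only [← Module.End.mul_eq_comp]
  rw [← key_comm n]
  noncomm_ring
end
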